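/- Let p, b, c, r, s be complex numbers and let x > 0 be real. Assume Re(s) > 0 and Re(p + r + 1) > 0. Then the Euler (beta) transform of the generalized Struve function satisfies ∫₀¹ z^{r−1} (1−z)^{s−1} · H_{p,b,c}(√x · z) dz = (√x/2)^{p+1} · Γ(s) · Σ_{k=0}^{∞} Γ(p+r+1+2k) / ( Γ(k + 3/2) · Γ(k + p + (b+2)/2) · Γ(p+r+s+1+2k) ) · (−c·x/4)^k, where both the integral and the series converge. -/

import Mathlib

open MeasureTheory Set Filter

noncomputable def struveH (p b c z : ℂ) : ℂ :=
  ∑' k : ℕ, (-c) ^ k /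
      (Complex.Gamma ((k : ℂ) + 3 / 2) * Complex.Gamma ((k : ℂ) + p + (b + 2) / 2)) *
    (z / 2) ^ (2 * (k : ℂ) + p + 1)

lemma struve_aux_summable (R : ℝ) (hR : 0 ≤ R) (d : ℂ) :
    Summable (fun k : ℕ => R ^ k /
      (‖Complex.Gamma ((k : ℂ) + 3 / 2)‖ *
        ‖Complex.Gamma ((k : ℂ) + d)‖)) := by
  set u : ℕ → ℝ := fun k => R ^ k /
      (‖Complex.Gamma ((k : ℂ) + 3 / 2)‖ *
        ‖Complex.Gamma ((k : ℂ) + d)‖) with hu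
  have hunonneg : ∀ k, 0 ≤ u k := by
    intro k
    apply div_nonneg (pow_nonneg hR _)
    positivity
  refine summable_of_ratio_norm_eventually_le (r := 1/2) (by norm_num) ?_
  filter_upwards [eventually_ge_atTop ⌈|d.re| + 1⌉₊, eventually_ge_atTop ⌈2 * R⌉₊]
    with k hk1 hk2
  have hk1' : (|d.re| + 1 : ℝ) ≤ k := le_trans (Nat.le_ceil _) (Nat.cast_le.2 hk1)
  have hk2' : (2 * R : ℝ) ≤ k := le_trans (Nat.le_ceil _) (Nat.cast_le.2 hk2)
  have hre : (1 : ℝ) ≤ ((k : ℂ) + d).re := by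
    simp only [Complex.add_re, Complex.natCast_re]
    have := neg_abs_le d.re
    linarith
  have habs : (1 : ℝ) ≤ ‖(k : ℂ) + d‖ := hre.trans (Complex.re_le_norm _)
  have hne : ((k : ℂ) + d) ≠ 0 := by
    intro h
    rw [h] at habs
    simp only [norm_zero] at habs
    linarith
  have hne32 : ((k : ℂ) + 3 / 2) ≠ 0 := by
    intro h
    have h2 : ((k : ℂ) + 3 / 2).re = 0 := by rw [h]; simp
    simp only [Complex.add_re, Complex.natCast_re, Complex.div_re] at h2
    norm_num at h2
    nlinarith [Nat.cast_nonneg (α := ℝ) k]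
  have hgam1 : Complex.Gamma (((k + 1 : ℕ) : ℂ) + 3 / 2)
      = ((k : ℂ) + 3 / 2) * Complex.Gamma ((k : ℂ) + 3 / 2) := by
    have h : (((k + 1 : ℕ)) : ℂ) + 3 / 2 = ((k : ℂ) + 3 / 2) + 1 := by push_cast; ring
    rw [h, Complex.Gamma_add_one _ hne32]
  have hgam2 : Complex.Gamma (((k + 1 : ℕ) : ℂ) + d)
      = ((k : ℂ) + d) * Complex.Gamma ((k : ℂ) + d) := by
    have h : (((k + 1 : ℕ)) : ℂ) + d = ((k : ℂ) + d) + 1 := by push_cast; ring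
    rw [h, Complex.Gamma_add_one _ hne]
  have habs32 : ‖(k : ℂ) + 3 / 2‖ = (k : ℝ) + 3 / 2 := by
    have h : ((k : ℂ) + 3 / 2) = (((k : ℝ) + 3 / 2 : ℝ) : ℂ) := by push_cast; ring
    rw [h, Complex.norm_real, Real.norm_eq_abs, abs_of_nonneg (by positivity)]
  have hstep : u (k + 1) =
      (R / (((k : ℝ) + 3 / 2) * ‖(k : ℂ) + d‖)) * u k := by
    rw [hu]
    simp only
    rw [hgam1, hgam2, norm_mul, norm_mul, habs32, pow_succ]
    rw [show R ^ k * R = R * R ^ k by ring]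
    rw [show ((k : ℝ) + 3 / 2) * ‖Complex.Gamma ((k : ℂ) + 3/2)‖ *
        (‖(k : ℂ) + d‖ * ‖Complex.Gamma ((k : ℂ) + d)‖)
        = (((k : ℝ) + 3 / 2) * ‖(k : ℂ) + d‖) *
          (‖Complex.Gamma ((k : ℂ) + 3/2)‖ *
            ‖Complex.Gamma ((k : ℂ) + d)‖) by ring]
    rw [mul_div_mul_comm]
  have hDpos : 0 < ((k : ℝ) + 3 / 2) * ‖(k : ℂ) + d‖ := by
    apply mul_pos (by positivity) (by linarith)
  have hratio : R / (((k : ℝ) + 3 / 2) * ‖(k : ℂ) + d‖) ≤ 1 / 2 := by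
    rw [div_le_iff₀ hDpos]
    have : (2 * R : ℝ) ≤ ((k : ℝ) + 3 / 2) * 1 := by linarith
    nlinarith [norm_nonneg ((k : ℂ) + d)]
  rw [Real.norm_of_nonneg (hunonneg _), Real.norm_of_nonneg (hunonneg _), hstep]
  have := hunonneg k
  have hrnn : 0 ≤ R / (((k : ℝ) + 3 / 2) * ‖(k : ℂ) + d‖) := by positivity
  nlinarith

/-- Euler (beta) transform of the generalized Struve function. -/
theorem euler_transform_struveH (p b c r s : ℂ) (x : ℝ) (hx : 0 < x)
    (hs : 0 < s.re) (hpr : 0 < (p + r + 1).re) :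
    IntegrableOn
      (fun z : ℝ => (z : ℂ) ^ (r - 1) * ((1 : ℂ) - z) ^ (s - 1) *
        struveH p b c ((Real.sqrt x : ℂ) * z)) (Ioc (0 : ℝ) 1) ∧
    Summable (fun k : ℕ =>
      Complex.Gamma (p + r + 1 + 2 * k) /
          (Complex.Gamma ((k : ℂ) + 3 / 2) * Complex.Gamma ((k : ℂ) + p + (b + 2) / 2) *
            Complex.Gamma (p + r + s + 1 + 2 * k)) *
        (-c * x / 4) ^ k) ∧
    ∫ z in Ioc (0 : ℝ) 1, (z : ℂ) ^ (r - 1) * ((1 : ℂ) - z) ^ (s - 1) *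
        struveH p b c ((Real.sqrt x : ℂ) * z) =
      ((Real.sqrt x : ℂ) / 2) ^ (p + 1) * Complex.Gamma s *
        ∑' k : ℕ,
          Complex.Gamma (p + r + 1 + 2 * k) /
              (Complex.Gamma ((k : ℂ) + 3 / 2) * Complex.Gamma ((k : ℂ) + p + (b + 2) / 2) *
                Complex.Gamma (p + r + s + 1 + 2 * k)) *
            (-c * x / 4) ^ k := by
  have hC : 0 < Real.sqrt x := Real.sqrt_pos.2 hx
  set C : ℝ := Real.sqrt x with hCdef
  have hCsq : C ^ 2 = x := Real.sq_sqrt hx.le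
  set a : ℕ → ℂ := fun k => (-c) ^ k /
      (Complex.Gamma ((k : ℂ) + 3 / 2) * Complex.Gamma ((k : ℂ) + p + (b + 2) / 2)) with ha
  set F : ℕ → ℝ → ℂ := fun k z => (z : ℂ) ^ (r - 1) * ((1 : ℂ) - z) ^ (s - 1) *
      (a k * ((C : ℂ) * z / 2) ^ (2 * (k : ℂ) + p + 1)) with hF
  set c1 : ℕ → ℂ := fun k => a k * (((C / 2 : ℝ)) : ℂ) ^ (2 * (k : ℂ) + p + 1) with hc1
  set t : ℕ → ℂ := fun k =>
      Complex.Gamma (p + r + 1 + 2 * k) /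
          (Complex.Gamma ((k : ℂ) + 3 / 2) * Complex.Gamma ((k : ℂ) + p + (b + 2) / 2) *
            Complex.Gamma (p + r + s + 1 + 2 * k)) *
        (-c * x / 4) ^ k with ht
  -- the original integrand equals the pointwise sum of the F k
  have horig : (fun z : ℝ => (z : ℂ) ^ (r - 1) * ((1 : ℂ) - z) ^ (s - 1) *
      struveH p b c ((C : ℂ) * z)) = fun z : ℝ => ∑' k, F k z := by
    funext z
    rw [struveH, ← tsum_mul_left]
  -- rewriting of F k on Ioc 0 1
  have hkey : ∀ (k : ℕ) (z : ℝ), z ∈ Ioc (0 : ℝ) 1 →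
      F k z = c1 k * ((z : ℂ) ^ (p + r + 1 + 2 * (k : ℂ) - 1) * ((1 : ℂ) - z) ^ (s - 1)) := by
    intro k z hz
    have hz0 : (z : ℂ) ≠ 0 := Complex.ofReal_ne_zero.2 hz.1.ne'
    have h1 : ((C : ℂ) * z / 2) = (((C / 2 : ℝ)) : ℂ) * ((z : ℝ) : ℂ) := by push_cast; ring
    have h2 : ((((C / 2 : ℝ)) : ℂ) * (z : ℂ)) ^ (2 * (k : ℂ) + p + 1)
        = (((C / 2 : ℝ)) : ℂ) ^ (2 * (k : ℂ) + p + 1) * (z : ℂ) ^ (2 * (k : ℂ) + p + 1) :=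
      Complex.mul_cpow_ofReal_nonneg (by positivity) hz.1.le _
    have h3 : (z : ℂ) ^ (r - 1) * (z : ℂ) ^ (2 * (k : ℂ) + p + 1)
        = (z : ℂ) ^ (p + r + 1 + 2 * (k : ℂ) - 1) := by
      rw [← Complex.cpow_add _ _ hz0]
      congr 1
      ring
    simp only [hF, hc1]
    rw [h1, h2, ← h3]
    ring
  -- real part computations
  have hre1 : ∀ k : ℕ, (p + r + 1 + 2 * (k : ℂ)).re = (p + r + 1).re + 2 * k := by
    intro k; simp [Complex.add_re, Complex.mul_re]
  have hre2 : ∀ k : ℕ, (p + r + 1 + 2 * (k : ℂ) + s).re = (p + r + 1).re + 2 * k + s.re := by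
    intro k; simp [Complex.add_re, Complex.mul_re]
  have hAre : ∀ k : ℕ, 0 < (p + r + 1 + 2 * (k : ℂ)).re := by
    intro k; rw [hre1 k]; positivity
  -- integrability of the beta-type integrands
  have hbetaInt : ∀ u : ℂ, 0 < u.re →
      IntegrableOn (fun z : ℝ => (z : ℂ) ^ (u - 1) * ((1 : ℂ) - z) ^ (s - 1)) (Ioc (0 : ℝ) 1) :=
    fun u hu => (intervalIntegrable_iff_integrableOn_Ioc_of_le zero_le_one).1
      (Complex.betaIntegral_convergent hu hs)
  have hG0int : IntegrableOn (fun z : ℝ => (z : ℂ) ^ (p + r + 1 - 1) * ((1 : ℂ) - z) ^ (s - 1))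
      (Ioc (0 : ℝ) 1) := hbetaInt (p + r + 1) hpr
  have hFint : ∀ k, IntegrableOn (F k) (Ioc (0 : ℝ) 1) := by
    intro k
    have h := (hbetaInt (p + r + 1 + 2 * (k : ℂ)) (hAre k)).const_mul (c1 k)
    exact IntegrableOn.congr_fun h (fun z hz => (hkey k z hz).symm) measurableSet_Ioc
  -- norm bound for F k
  have hnormF : ∀ (k : ℕ) (z : ℝ), z ∈ Ioc (0 : ℝ) 1 →
      ‖F k z‖ ≤ ‖c1 k‖ * ‖(z : ℂ) ^ (p + r + 1 - 1) * ((1 : ℂ) - z) ^ (s - 1)‖ := by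
    intro k z hz
    rw [hkey k z hz, norm_mul, norm_mul, norm_mul]
    have h1 : ‖(z : ℂ) ^ (p + r + 1 + 2 * (k : ℂ) - 1)‖
        = z ^ ((p + r + 1 - 1).re + 2 * k) := by
      rw [Complex.norm_cpow_eq_rpow_re_of_pos hz.1]
      congr 1
      simp [Complex.add_re, Complex.sub_re, Complex.mul_re]; ring
    have h2 : ‖(z : ℂ) ^ (p + r + 1 - 1)‖ = z ^ ((p + r + 1 - 1).re) := by
      rw [Complex.norm_cpow_eq_rpow_re_of_pos hz.1]
    have h3 : z ^ ((p + r + 1 - 1).re + 2 * k) ≤ z ^ ((p + r + 1 - 1).re) := by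
      rw [Real.rpow_add hz.1]
      have h4 : z ^ (2 * (k : ℝ)) ≤ 1 :=
        Real.rpow_le_one hz.1.le hz.2 (by positivity)
      nlinarith [Real.rpow_nonneg hz.1.le ((p + r + 1 - 1).re),
        Real.rpow_nonneg hz.1.le (2 * (k : ℝ))]
    rw [show ‖(z : ℂ) ^ (p + r + 1 - 1) * ((1 : ℂ) - z) ^ (s - 1)‖
      = ‖(z : ℂ) ^ (p + r + 1 - 1)‖ * ‖((1 : ℂ) - z) ^ (s - 1)‖ from norm_mul _ _]
    rw [h1, h2]
    have h0 : 0 ≤ ‖a k‖ * ‖(((C / 2 : ℝ)) : ℂ) ^ (2 * (k : ℂ) + p + 1)‖ :=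
      mul_nonneg (norm_nonneg _) (norm_nonneg _)
    exact mul_le_mul_of_nonneg_left
      (mul_le_mul_of_nonneg_right h3 (norm_nonneg _)) h0
  -- norm of c1
  have hc1norm : ∀ k : ℕ, ‖c1 k‖ = (C / 2) ^ ((p + 1).re) *
      ((‖c‖ * (x / 4)) ^ k /
        (‖Complex.Gamma ((k : ℂ) + 3 / 2)‖ *
          ‖Complex.Gamma ((k : ℂ) + (p + (b + 2) / 2))‖)) := by
    intro k
    simp only [hc1, ha, norm_mul]
    have h1 : ‖(-c) ^ k / (Complex.Gamma ((k : ℂ) + 3 / 2) *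
        Complex.Gamma ((k : ℂ) + p + (b + 2) / 2))‖
        = (‖c‖) ^ k / (‖Complex.Gamma ((k : ℂ) + 3 / 2)‖ *
          ‖Complex.Gamma ((k : ℂ) + (p + (b + 2) / 2))‖) := by
      rw [show (k : ℂ) + p + (b + 2) / 2 = (k : ℂ) + (p + (b + 2) / 2) from add_assoc _ _ _]
      rw [norm_div, norm_pow, norm_mul]
      simp
    have h2 : ‖(((C / 2 : ℝ)) : ℂ) ^ (2 * (k : ℂ) + p + 1)‖
        = (x / 4) ^ k * (C / 2) ^ ((p + 1).re) := by
      rw [Complex.norm_cpow_eq_rpow_re_of_pos (by positivity)]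
      have h3 : (2 * (k : ℂ) + p + 1).re = 2 * (k : ℝ) + (p + 1).re := by
        simp [Complex.add_re, Complex.mul_re]; ring
      rw [h3, Real.rpow_add (by positivity)]
      congr 1
      rw [show (2 * (k : ℝ)) = ((2 * k : ℕ) : ℝ) by push_cast; ring, Real.rpow_natCast,
        pow_mul]
      congr 1
      rw [div_pow, hCsq]; norm_num
    rw [h1, h2, mul_pow]
    ring
  have hsummc1 : Summable (fun k => ‖c1 k‖) := by
    have h := (struve_aux_summable (‖c‖ * (x / 4)) (by positivity)
      (p + (b + 2) / 2)).mul_left ((C / 2) ^ ((p + 1).re))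
    exact h.congr fun k => (hc1norm k).symm
  -- pointwise summability
  have hzsumnorm : ∀ z : ℝ, z ∈ Ioc (0 : ℝ) 1 → Summable (fun k => ‖F k z‖) := by
    intro z hz
    refine Summable.of_nonneg_of_le (fun k => norm_nonneg _) (fun k => hnormF k z hz) ?_
    exact hsummc1.mul_right _
  have hzsum : ∀ z : ℝ, z ∈ Ioc (0 : ℝ) 1 → Summable (fun k => F k z) :=
    fun z hz => (hzsumnorm z hz).of_norm
  -- measurability of the sum
  have hmeasTsum : AEStronglyMeasurable (fun z => ∑' k, F k z)
      (volume.restrict (Ioc (0 : ℝ) 1)) := by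
    refine aestronglyMeasurable_of_tendsto_ae atTop
      (f := fun n (z : ℝ) => ∑ k ∈ Finset.range n, F k z) (fun n => ?_) ?_
    · exact Finset.aestronglyMeasurable_fun_sum _ fun k _ => (hFint k).aestronglyMeasurable
    · filter_upwards [ae_restrict_mem measurableSet_Ioc] with z hz
      exact (hzsum z hz).hasSum.tendsto_sum_nat
  -- integrability of the sum
  have hintTsum : IntegrableOn (fun z => ∑' k, F k z) (Ioc (0 : ℝ) 1) := by
    refine Integrable.mono' (hG0int.norm.const_mul (∑' k, ‖c1 k‖)) hmeasTsum ?_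
    filter_upwards [ae_restrict_mem measurableSet_Ioc] with z hz
    calc ‖∑' k, F k z‖ ≤ ∑' k, ‖F k z‖ := norm_tsum_le_tsum_norm (hzsumnorm z hz)
      _ ≤ ∑' k, ‖c1 k‖ * ‖(z : ℂ) ^ (p + r + 1 - 1) * ((1 : ℂ) - z) ^ (s - 1)‖ :=
          Summable.tsum_le_tsum (fun k => hnormF k z hz) (hzsumnorm z hz) (hsummc1.mul_right _)
      _ = (∑' k, ‖c1 k‖) * ‖(z : ℂ) ^ (p + r + 1 - 1) * ((1 : ℂ) - z) ^ (s - 1)‖ :=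
          tsum_mul_right
  -- summability of the integrals of norms
  have hintnorm : ∀ k : ℕ, ∫ z in Ioc (0 : ℝ) 1, ‖F k z‖ ≤ ‖c1 k‖ *
      ∫ z in Ioc (0 : ℝ) 1, ‖(z : ℂ) ^ (p + r + 1 - 1) * ((1 : ℂ) - z) ^ (s - 1)‖ := by
    intro k
    rw [← integral_const_mul]
    refine setIntegral_mono_on (hFint k).norm ?_ measurableSet_Ioc (fun z hz => hnormF k z hz)
    exact hG0int.norm.const_mul _
  have hsumIntNorm : Summable (fun k => ∫ z in Ioc (0 : ℝ) 1, ‖F k z‖) := by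
    refine Summable.of_nonneg_of_le
      (fun k => integral_nonneg fun z => norm_nonneg _) hintnorm ?_
    exact hsummc1.mul_right _
  -- value of each integral
  have hAsre : ∀ k : ℕ, 0 < (p + r + 1 + 2 * (k : ℂ) + s).re := by
    intro k; rw [hre2 k]; positivity
  have hbetaval : ∀ k : ℕ, ∫ z in Ioc (0 : ℝ) 1, F k z
      = c1 k * (Complex.Gamma (p + r + 1 + 2 * (k : ℂ)) * Complex.Gamma s /
          Complex.Gamma (p + r + 1 + 2 * (k : ℂ) + s)) := by
    intro k
    have h1 : ∫ z in Ioc (0 : ℝ) 1, F k z = ∫ z in Ioc (0 : ℝ) 1,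
        c1 k * ((z : ℂ) ^ (p + r + 1 + 2 * (k : ℂ) - 1) * ((1 : ℂ) - z) ^ (s - 1)) :=
      setIntegral_congr_fun measurableSet_Ioc (fun z hz => hkey k z hz)
    rw [h1, integral_const_mul]
    congr 1
    have h2 : Complex.betaIntegral (p + r + 1 + 2 * (k : ℂ)) s
        = ∫ z in Ioc (0 : ℝ) 1, (z : ℂ) ^ (p + r + 1 + 2 * (k : ℂ) - 1) *
            ((1 : ℂ) - z) ^ (s - 1) := by
      rw [Complex.betaIntegral, intervalIntegral.integral_of_le zero_le_one]
    rw [← h2]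
    have h3 := Complex.Gamma_mul_Gamma_eq_betaIntegral (hAre k) hs
    have h4 : Complex.Gamma (p + r + 1 + 2 * (k : ℂ) + s) ≠ 0 :=
      Complex.Gamma_ne_zero_of_re_pos (hAsre k)
    rw [eq_div_iff h4]
    rw [h3]
    ring
  -- term identity
  have hterm : ∀ k : ℕ, c1 k * (Complex.Gamma (p + r + 1 + 2 * (k : ℂ)) * Complex.Gamma s /
      Complex.Gamma (p + r + 1 + 2 * (k : ℂ) + s))
      = ((C : ℂ) / 2) ^ (p + 1) * Complex.Gamma s * t k := by
    intro k
    have hC20 : (((C / 2 : ℝ)) : ℂ) ≠ 0 := Complex.ofReal_ne_zero.2 (by positivity)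
    have hcp : (((C / 2 : ℝ)) : ℂ) ^ (2 * (k : ℂ) + p + 1)
        = ((x : ℂ) / 4) ^ k * (((C / 2 : ℝ)) : ℂ) ^ (p + 1) := by
      rw [show (2 * (k : ℂ) + p + 1) = ((2 * k : ℕ) : ℂ) + (p + 1) by push_cast; ring]
      rw [Complex.cpow_add _ _ hC20, Complex.cpow_natCast, pow_mul]
      congr 2
      rw [← Complex.ofReal_pow, div_pow, hCsq]
      push_cast
      norm_num
    have hofr : (((C / 2 : ℝ)) : ℂ) = (C : ℂ) / 2 := by push_cast; ring
    have he2 : p + r + 1 + 2 * (k : ℂ) + s = p + r + s + 1 + 2 * (k : ℂ) := by ring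
    have hpow : (-c * (x : ℂ) / 4) ^ k = (-c) ^ k * ((x : ℂ) / 4) ^ k := by
      rw [← mul_pow]; congr 1; ring
    simp only [hc1, ha, ht]
    rw [hcp, hofr, he2, hpow]
    ring
  -- summability of the integrals
  have hsumIntF : Summable (fun k => ∫ z in Ioc (0 : ℝ) 1, F k z) :=
    Summable.of_norm_bounded hsumIntNorm fun k => norm_integral_le_integral_norm _
  have hFeq : ∀ k : ℕ, ∫ z in Ioc (0 : ℝ) 1, F k z
      = ((C : ℂ) / 2) ^ (p + 1) * Complex.Gamma s * t k := fun k => by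
    rw [hbetaval k, hterm k]
  have hKne : ((C : ℂ) / 2) ^ (p + 1) * Complex.Gamma s ≠ 0 := by
    refine mul_ne_zero ?_ (Complex.Gamma_ne_zero_of_re_pos hs)
    rw [Ne, Complex.cpow_eq_zero_iff]
    push_neg
    intro h
    exfalso
    have : (C : ℂ) ≠ 0 := Complex.ofReal_ne_zero.2 hC.ne'
    exact (div_ne_zero this two_ne_zero) h
  have hsumt : Summable t := by
    have h := hsumIntF.div_const (((C : ℂ) / 2) ^ (p + 1) * Complex.Gamma s)
    refine h.congr fun k => ?_
    rw [hFeq k, mul_comm, mul_div_assoc, div_self hKne, mul_one]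
  refine ⟨?_, hsumt, ?_⟩
  · rw [horig]; exact hintTsum
  · rw [horig]
    calc ∫ z in Ioc (0 : ℝ) 1, ∑' k, F k z
        = ∑' k, ∫ z in Ioc (0 : ℝ) 1, F k z :=
          (integral_tsum_of_summable_integral_norm (fun k => hFint k) hsumIntNorm).symm
      _ = ∑' k, ((C : ℂ) / 2) ^ (p + 1) * Complex.Gamma s * t k := tsum_congr hFeq
      _ = ((C : ℂ) / 2) ^ (p + 1) * Complex.Gamma s * ∑' k, t k := tsum_mul_left
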